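/- The ∗-product of (p,q)-Appell sequences is commutative: if (f_n) and (g_n) are (p,q)-Appell polynomial sequences with coefficient sequences (a_k) and (b_k) (so f_n(x) = ∑_{k=0}^{n} [n choose k]_{p,q} p^{(n−k)(n−k−1)/2} a_k x^{n−k} with a_0 ≠ 0, and similarly for g with b_0 ≠ 0), then for all n ≥ 0 and all real x, ∑_{k=0}^{n} [n choose k]_{p,q} a_{n−k} g_k(x) = ∑_{k=0}^{n} [n choose k]_{p,q} b_{n−k} f_k(x), i.e. (f∗g)_n = (g∗f)_n. -/

import Mathlib

noncomputable section
open Finset Polynomial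

/-- The (p,q)-number `[n]_{p,q} = (p^n - q^n)/(p - q)`. -/
def pqNum (p q : ℝ) (n : ℕ) : ℝ := (p ^ n - q ^ n) / (p - q)

/-- The (p,q)-factorial `[n]_{p,q}! = ∏_{k=1}^n [k]_{p,q}`. -/
def pqFact (p q : ℝ) (n : ℕ) : ℝ := ∏ k ∈ Finset.Icc 1 n, pqNum p q k

/-- The (p,q)-binomial coefficient. -/
def pqBinom (p q : ℝ) (n k : ℕ) : ℝ := pqFact p q n / (pqFact p q k * pqFact p q (n - k))

/-- The (p,q)-derivative on polynomials: the linear operator with `D(X^n) = [n]_{p,q} X^(n-1)`. -/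
def pqDeriv (p q : ℝ) (f : Polynomial ℝ) : Polynomial ℝ :=
  f.sum fun n a => Polynomial.C (a * pqNum p q n) * Polynomial.X ^ (n - 1)

/-- The (p,q)-derivative on formal power series, acting coefficientwise by
`D(X^n) = [n]_{p,q} X^(n-1)`. -/
def pqDerivPS (p q : ℝ) (f : PowerSeries ℝ) : PowerSeries ℝ :=
  PowerSeries.mk fun n => pqNum p q (n + 1) * PowerSeries.coeff (n + 1) f

/-- The double (p,q)-factorial `[2m]_{p,q}!! = ∏_{k=1}^m [2k]_{p,q}`. -/
def pqDoubleFact (p q : ℝ) (m : ℕ) : ℝ := ∏ k ∈ Finset.Icc 1 m, pqNum p q (2 * k)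

/-- A sequence of real polynomials of exact degree `n` is (p,q)-Appell when
`D_{p,q} f_{n+1}(x) = [n+1]_{p,q} f_n(p x)` for all `n ≥ 0` and all `x`. -/
def IsPQAppell (p q : ℝ) (f : ℕ → Polynomial ℝ) : Prop :=
  (∀ n, (f n).natDegree = n) ∧
    ∀ (n : ℕ) (x : ℝ), (pqDeriv p q (f (n + 1))).eval x = pqNum p q (n + 1) * (f n).eval (p * x)


lemma pqFact_pos (p q : ℝ) (hq : 0 < q) (hpq : q < p) (n : ℕ) : 0 < pqFact p q n :=
  Finset.prod_pos fun k hk => by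
    have hk1 : k ≠ 0 := by have := (Finset.mem_Icc.mp hk).1; omega
    exact div_pos (sub_pos.mpr (pow_lt_pow_left₀ hpq hq.le hk1)) (sub_pos.mpr hpq)

lemma pqBinom_sym (p q : ℝ) (hq : 0 < q) (hpq : q < p) {n k j : ℕ} (hj : j ≤ k) (hk : k ≤ n) :
    pqBinom p q n k * pqBinom p q k j
      = pqBinom p q n (n - j) * pqBinom p q (n - j) (n - k) := by
  have F : ∀ m, pqFact p q m ≠ 0 := fun m => (pqFact_pos p q hq hpq m).ne'
  unfold pqBinom
  rw [show n - (n - j) = j by omega, show (n - j) - (n - k) = k - j by omega]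
  field_simp
  rw [div_eq_div_iff (by simp [F])
    (by simp [F])]
  ring

/-- the *-product of (p,q)-Appell sequences is commutative. -/
theorem pq_appell_star_comm (p q : ℝ) (hq : 0 < q) (hpq : q < p)
    (a b : ℕ → ℝ) (ha : a 0 ≠ 0) (hb : b 0 ≠ 0)
    (f g : ℕ → ℝ → ℝ)
    (hf : ∀ (n : ℕ) (x : ℝ), f n x = ∑ k ∈ Finset.range (n + 1),
      pqBinom p q n k * p ^ ((n - k) * (n - k - 1) / 2) * a k * x ^ (n - k))
    (hg : ∀ (n : ℕ) (x : ℝ), g n x = ∑ k ∈ Finset.range (n + 1),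
      pqBinom p q n k * p ^ ((n - k) * (n - k - 1) / 2) * b k * x ^ (n - k)) :
    ∀ (n : ℕ) (x : ℝ),
      (∑ k ∈ Finset.range (n + 1), pqBinom p q n k * a (n - k) * g k x)
        = ∑ k ∈ Finset.range (n + 1), pqBinom p q n k * b (n - k) * f k x := by
  intro n x
  simp only [hf, hg, Finset.mul_sum]
  rw [Finset.sum_sigma', Finset.sum_sigma']
  apply Finset.sum_bij' (fun (s : Σ _ : ℕ, ℕ) _ => (⟨n - s.2, n - s.1⟩ : Σ _ : ℕ, ℕ))
    (fun (s : Σ _ : ℕ, ℕ) _ => (⟨n - s.2, n - s.1⟩ : Σ _ : ℕ, ℕ))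
  · rintro ⟨k, j⟩ hm
    simp only [Finset.mem_sigma, Finset.mem_range] at hm ⊢
    omega
  · rintro ⟨k, j⟩ hm
    simp only [Finset.mem_sigma, Finset.mem_range] at hm ⊢
    omega
  · rintro ⟨k, j⟩ hm
    simp only [Finset.mem_sigma, Finset.mem_range] at hm
    simp only [Sigma.mk.inj_iff]
    refine ⟨by omega, heq_of_eq (by omega)⟩
  · rintro ⟨k, j⟩ hm
    simp only [Finset.mem_sigma, Finset.mem_range] at hm
    simp only [Sigma.mk.inj_iff]
    refine ⟨by omega, heq_of_eq (by omega)⟩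
  · rintro ⟨k, j⟩ hm
    simp only [Finset.mem_sigma, Finset.mem_range] at hm
    obtain ⟨hk, hj⟩ := hm
    have hj' : j ≤ k := by omega
    have hk' : k ≤ n := by omega
    have h1 : n - (n - j) = j := by omega
    have h2 : (n - j) - (n - k) = k - j := by omega
    have h3 : n - (n - k) = k := by omega
    simp only [h1, h2, h3]
    rw [show pqBinom p q n k * a (n - k) * (pqBinom p q k j * p ^ ((k - j) * (k - j - 1) / 2) * b j * x ^ (k - j))
        = (pqBinom p q n k * pqBinom p q k j) * (a (n - k) * b j * p ^ ((k - j) * (k - j - 1) / 2) * x ^ (k - j)) by ring,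
      pqBinom_sym p q hq hpq hj' hk']
    ring
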